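/- Let A, A' ⊆ ℤ be semi-periodic modulo g and g' respectively (i.e. A + g ⊆ A and A' + g' ⊆ A'), where g, g' ≥ 1. Then A - A' is fully periodic modulo d = gcd(g, g'), i.e. (A - A') + d = A - A'. -/

import Mathlib

theorem difference_fully_periodic (A A' : Set ℤ) (g g' : ℤ) (hg : 1 ≤ g) (hg' : 1 ≤ g')
    (hA : (fun x => x + g) '' A ⊆ A) (hA' : (fun x => x + g') '' A' ⊆ A') :
    (fun x => x + (Int.gcd g g' : ℤ)) '' {z : ℤ | ∃ x ∈ A, ∃ y ∈ A', z = x - y} =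
      {z : ℤ | ∃ x ∈ A, ∃ y ∈ A', z = x - y} := by
  set d : ℤ := (Int.gcd g g' : ℤ) with hd
  have hdg : d ∣ g := Int.gcd_dvd_left g g'
  have hdg' : d ∣ g' := Int.gcd_dvd_right g g'
  have hdleg : d ≤ g := Int.le_of_dvd (by linarith) hdg
  have hdleg' : d ≤ g' := Int.le_of_dvd (by linarith) hdg'
  have key : ∀ (m : ℕ) (x : ℤ), x ∈ A → x + (m : ℤ) * g ∈ A := by
    intro m
    induction m with
    | zero => intro x hx; simpa using hx
    | succ n ih =>
      intro x hx
      have h1 : x + (n : ℤ) * g ∈ A := ih x hx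
      have h2 : x + (n : ℤ) * g + g ∈ A := hA ⟨x + (n : ℤ) * g, h1, rfl⟩
      have : x + ((n : ℕ).succ : ℤ) * g = x + (n : ℤ) * g + g := by push_cast; ring
      rwa [this]
  have key' : ∀ (m : ℕ) (x : ℤ), x ∈ A' → x + (m : ℤ) * g' ∈ A' := by
    intro m
    induction m with
    | zero => intro x hx; simpa using hx
    | succ n ih =>
      intro x hx
      have h1 : x + (n : ℤ) * g' ∈ A' := ih x hx
      have h2 : x + (n : ℤ) * g' + g' ∈ A' := hA' ⟨x + (n : ℤ) * g', h1, rfl⟩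
      have : x + ((n : ℕ).succ : ℤ) * g' = x + (n : ℤ) * g' + g' := by push_cast; ring
      rwa [this]
  have hbez : d = g * Int.gcdA g g' + g' * Int.gcdB g g' := Int.gcd_eq_gcd_ab g g'
  -- construction 1 : d = m*g - n*g'
  obtain ⟨m, n, hmn⟩ : ∃ m n : ℕ, (m : ℤ) * g - (n : ℤ) * g' = d := by
    set u0 := Int.gcdA g g'
    set v0 := Int.gcdB g g'
    set k : ℤ := 1 + |u0| with hk
    have hk0 : 0 ≤ k := by positivity
    set u : ℤ := u0 + k * g' with hu
    set v : ℤ := v0 - k * g with hv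
    have huv : g * u + g' * v = d := by rw [hu, hv]; rw [hbez]; ring
    have hu1 : 1 ≤ u := by
      have : k ≤ k * g' := le_mul_of_one_le_right hk0 hg'
      have h2 : -u0 ≤ |u0| := neg_le_abs u0
      rw [hu]; linarith
    have hv0 : v ≤ 0 := by
      have hvg : v * g' = d - u * g := by linarith [huv]
      have : g ≤ u * g := le_mul_of_one_le_left (by linarith) hu1
      have hvg0 : v * g' ≤ 0 := by linarith
      nlinarith
    refine ⟨u.toNat, (-v).toNat, ?_⟩
    rw [Int.toNat_of_nonneg (by linarith), Int.toNat_of_nonneg (by linarith)]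
    linarith [huv]
  -- construction 2 : d = n*g' - m*g
  obtain ⟨m', n', hmn'⟩ : ∃ m n : ℕ, (n : ℤ) * g' - (m : ℤ) * g = d := by
    set u0 := Int.gcdA g g'
    set v0 := Int.gcdB g g'
    set k : ℤ := 1 + |v0| with hk
    have hk0 : 0 ≤ k := by positivity
    set v : ℤ := v0 + k * g with hv
    set u : ℤ := u0 - k * g' with hu
    have huv : g * u + g' * v = d := by rw [hu, hv]; rw [hbez]; ring
    have hv1 : 1 ≤ v := by
      have : k ≤ k * g := le_mul_of_one_le_right hk0 hg
      have h2 : -v0 ≤ |v0| := neg_le_abs v0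
      rw [hv]; linarith
    have hu0 : u ≤ 0 := by
      have hug : u * g = d - v * g' := by linarith [huv]
      have : g' ≤ v * g' := le_mul_of_one_le_left (by linarith) hv1
      have hug0 : u * g ≤ 0 := by linarith
      nlinarith
    refine ⟨(-u).toNat, v.toNat, ?_⟩
    rw [Int.toNat_of_nonneg (by linarith), Int.toNat_of_nonneg (by linarith)]
    linarith [huv]
  ext z
  constructor
  · rintro ⟨w, ⟨x, hx, y, hy, rfl⟩, rfl⟩
    refine ⟨x + (m : ℤ) * g, key m x hx, y + (n : ℤ) * g', key' n y hy, ?_⟩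
    simp only
    linarith
  · rintro ⟨x, hx, y, hy, rfl⟩
    refine ⟨(x + (m' : ℤ) * g) - (y + (n' : ℤ) * g'),
      ⟨x + (m' : ℤ) * g, key m' x hx, y + (n' : ℤ) * g', key' n' y hy, rfl⟩, ?_⟩
    simp only
    linarith
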